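/- (Union of disjoint Arakeljan sets, plane case) If E and F are disjoint closed Arakeljan sets in ℂ (i.e., closed sets such that ℂ* \ E and ℂ* \ F are connected and locally connected at ∞, where ℂ* is the one-point compactification), then E ∪ F is again an Arakeljan set. -/

import Mathlib

open Set Bornology

/-- A closed set `S ⊆ ℂ` is an Arakeljan set if every connected component of its
complement is unbounded (no holes), and for every compact connected `K` the
union of the bounded components of `ℂ \ (S ∪ K)` is bounded. -/
def ArakelyanSet (S : Set ℂ) : Prop :=
  IsClosed S ∧
  (∀ z ∉ S, ¬ IsBounded (connectedComponentIn Sᶜ z)) ∧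
  (∀ K : Set ℂ, IsCompact K → IsConnected K →
    IsBounded (⋃ z ∈ {z : ℂ | z ∉ S ∪ K ∧ IsBounded (connectedComponentIn (S ∪ K)ᶜ z)},
      connectedComponentIn (S ∪ K)ᶜ z))

open Metric

namespace ArakelyanAuxiliary

/-- Points outside a ball form a path connected set in `ℂ`. -/
lemma joinedIn_far {r : ℝ} (hr : 0 ≤ r) {y : ℂ} (hy : r < ‖y‖) {R : ℝ} (hR : ‖y‖ ≤ R) :
    JoinedIn {z : ℂ | r < ‖z‖} y ((R / ‖y‖ : ℝ) • y) := by
  have hy0 : 0 < ‖y‖ := lt_of_le_of_lt hr hy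
  have hc1 : (1:ℝ) ≤ R / ‖y‖ := (one_le_div hy0).mpr hR
  have hseg : segment ℝ y ((R / ‖y‖ : ℝ) • y) ⊆ {z : ℂ | r < ‖z‖} := by
    rintro z ⟨a, b, ha, hb, hab, rfl⟩
    have he : a • y + b • (R / ‖y‖ : ℝ) • y = ((a + b * (R / ‖y‖)) : ℝ) • y := by
      rw [smul_smul, add_smul]
    rw [he]
    have hk : (1:ℝ) ≤ a + b * (R / ‖y‖) := by nlinarith
    have hnorm : ‖((a + b * (R / ‖y‖)) : ℝ) • y‖ = (a + b * (R / ‖y‖)) * ‖y‖ := by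
      rw [norm_smul, Real.norm_eq_abs, abs_of_nonneg (by linarith)]
    simp only [mem_setOf_eq, hnorm]
    nlinarith
  have hpc := (convex_segment y ((R / ‖y‖ : ℝ) • y)).isPathConnected
      ⟨y, left_mem_segment ℝ _ _⟩
  exact (hpc.joinedIn y (left_mem_segment ℝ _ _) _ (right_mem_segment ℝ _ _)).mono hseg

lemma isPathConnected_far {r : ℝ} (hr : 0 ≤ r) : IsPathConnected {z : ℂ | r < ‖z‖} := by
  have hnx : ‖((r+1 : ℝ) : ℂ)‖ = r + 1 := by
    rw [Complex.norm_real, Real.norm_eq_abs, abs_of_nonneg (by linarith)]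
  have hx₀ : ((r+1 : ℝ) : ℂ) ∈ {z : ℂ | r < ‖z‖} := by
    simp only [mem_setOf_eq, hnx]; linarith
  refine ⟨((r+1 : ℝ) : ℂ), hx₀, ?_⟩
  intro y hy
  have hy' : r < ‖y‖ := hy
  have hy0 : 0 < ‖y‖ := lt_of_le_of_lt hr hy'
  set R : ℝ := max ‖y‖ (r+1) with hRdef
  have hR0 : 0 ≤ R := le_trans (norm_nonneg y) (le_max_left _ _)
  have hRr : r < R := lt_of_lt_of_le (by linarith) (le_max_right _ _)
  have j1 : JoinedIn {z : ℂ | r < ‖z‖} y ((R / ‖y‖ : ℝ) • y) :=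
    joinedIn_far hr hy' (le_max_left _ _)
  have j2 : JoinedIn {z : ℂ | r < ‖z‖} ((r+1 : ℝ) : ℂ) ((R / ‖((r+1 : ℝ) : ℂ)‖ : ℝ) • ((r+1 : ℝ) : ℂ)) :=
    joinedIn_far hr hx₀ (by rw [hnx]; exact le_max_right _ _)
  have hu : ‖(R / ‖y‖ : ℝ) • y‖ = R := by
    rw [norm_smul, Real.norm_eq_abs, abs_of_nonneg (div_nonneg hR0 (norm_nonneg _)),
      div_mul_cancel₀ _ (ne_of_gt hy0)]
  have hv : ‖(R / ‖((r+1 : ℝ) : ℂ)‖ : ℝ) • ((r+1 : ℝ) : ℂ)‖ = R := by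
    rw [norm_smul, Real.norm_eq_abs, abs_of_nonneg (div_nonneg hR0 (norm_nonneg _)),
      div_mul_cancel₀ _ (by rw [hnx]; linarith)]
  have hsph : IsPathConnected (sphere (0:ℂ) R) :=
    isPathConnected_sphere (by rw [Complex.rank_real_complex]; norm_num) 0 hR0
  have hsphsub : sphere (0:ℂ) R ⊆ {z : ℂ | r < ‖z‖} := by
    intro z hz
    have := mem_sphere_zero_iff_norm.mp hz
    simp only [mem_setOf_eq, this]; exact hRr
  have jsph : JoinedIn {z : ℂ | r < ‖z‖} ((R / ‖y‖ : ℝ) • y)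
      ((R / ‖((r+1 : ℝ) : ℂ)‖ : ℝ) • ((r+1 : ℝ) : ℂ)) :=
    (hsph.joinedIn _ (mem_sphere_zero_iff_norm.mpr hu) _ (mem_sphere_zero_iff_norm.mpr hv)).mono
      hsphsub
  exact ((j1.trans jsph).trans j2.symm).symm

lemma far_not_bounded (r : ℝ) : ¬ IsBounded {z : ℂ | r < ‖z‖} := by
  intro h
  obtain ⟨R, hR⟩ := h.subset_closedBall 0
  set x : ℝ := max (max r R) 0 + 1 with hx
  have hxr : r < x := lt_of_le_of_lt ((le_max_left r R).trans (le_max_left _ 0)) (lt_add_one _)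
  have hxR : R < x := lt_of_le_of_lt ((le_max_right r R).trans (le_max_left _ 0)) (lt_add_one _)
  have hx0 : 0 ≤ x := le_trans (le_max_right _ 0) (le_of_lt (lt_add_one _))
  have hnx : ‖((x : ℝ) : ℂ)‖ = x := by
    rw [Complex.norm_real, Real.norm_eq_abs, abs_of_nonneg hx0]
  have hmem : ((x : ℝ) : ℂ) ∈ {z : ℂ | r < ‖z‖} := by simp only [mem_setOf_eq, hnx]; exact hxr
  have := mem_closedBall_zero_iff.mp (hR hmem)
  rw [hnx] at this
  linarith

/-- relative closedness of a connected component of an open set. -/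
lemma closure_inter_subset {Ω : Set ℂ} (hΩ : IsOpen Ω) (x : ℂ) :
    closure (connectedComponentIn Ω x) ∩ Ω ⊆ connectedComponentIn Ω x := by
  rintro y ⟨hyc, hyΩ⟩
  have hopen : IsOpen (connectedComponentIn Ω y) := hΩ.connectedComponentIn
  have hmem : y ∈ connectedComponentIn Ω y := mem_connectedComponentIn hyΩ
  obtain ⟨w, hw1, hw2⟩ := (_root_.mem_closure_iff.mp hyc) _ hopen hmem
  have heq : connectedComponentIn Ω x = connectedComponentIn Ω y :=
    (connectedComponentIn_eq hw2).trans (connectedComponentIn_eq hw1).symm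
  rw [heq]; exact hmem

/-- Replacing the obstacle by a smaller closed set containing the relevant part of the
boundary does not change a bounded component. -/
lemma recomp {S T : Set ℂ} (hS : IsClosed S) (hT : IsClosed T) (hTS : T ⊆ S) {z : ℂ}
    (hz : z ∉ S) (hsub : S ∩ closure (connectedComponentIn Sᶜ z) ⊆ T) :
    connectedComponentIn Tᶜ z = connectedComponentIn Sᶜ z := by
  set C := connectedComponentIn Sᶜ z with hCdef
  have hzS : z ∈ Sᶜ := hz
  have hzT : z ∈ Tᶜ := fun h => hz (hTS h)
  have hCopen : IsOpen C := hS.isOpen_compl.connectedComponentIn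
  have hCT : C ⊆ Tᶜ := (connectedComponentIn_subset _ _).trans (compl_subset_compl.mpr hTS)
  refine subset_antisymm ?_
    (isPreconnected_connectedComponentIn.subset_connectedComponentIn
      (mem_connectedComponentIn hzS) hCT)
  have hV : IsOpen (Tᶜ \ closure C) := hT.isOpen_compl.sdiff isClosed_closure
  have hdisj : Disjoint C (Tᶜ \ closure C) :=
    disjoint_left.mpr fun w hw hw' => hw'.2 (subset_closure hw)
  have hcover : connectedComponentIn Tᶜ z ⊆ C ∪ (Tᶜ \ closure C) := by
    intro w hw
    have hwT : w ∈ Tᶜ := connectedComponentIn_subset _ _ hw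
    by_cases hwc : w ∈ closure C
    · left
      by_cases hws : w ∈ S
      · exact absurd (hsub ⟨hws, hwc⟩) hwT
      · exact closure_inter_subset hS.isOpen_compl z ⟨hwc, hws⟩
    · exact Or.inr ⟨hwT, hwc⟩
  exact IsPreconnected.subset_left_of_subset_union hCopen hV hdisj hcover
    ⟨z, mem_connectedComponentIn hzT, mem_connectedComponentIn hzS⟩
    isPreconnected_connectedComponentIn

/-- two unbounded components of the complement of a bounded set agree. -/
lemma comp_eq_of_unbounded {M : Set ℂ} {r : ℝ} (hr : 0 ≤ r) (hM : M ⊆ closedBall 0 r)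
    {z b : ℂ} (hz : z ∈ Mᶜ) (hb : b ∈ Mᶜ)
    (hzu : ¬ IsBounded (connectedComponentIn Mᶜ z))
    (hbu : ¬ IsBounded (connectedComponentIn Mᶜ b)) :
    connectedComponentIn Mᶜ z = connectedComponentIn Mᶜ b := by
  have hFS : {w : ℂ | r < ‖w‖} ⊆ Mᶜ := fun w hw hwM =>
    not_lt.mpr (mem_closedBall_zero_iff.mp (hM hwM)) hw
  have hFSc : IsPreconnected {w : ℂ | r < ‖w‖} :=
    (isPathConnected_far hr).isConnected.isPreconnected
  have key : ∀ c : ℂ, ¬ IsBounded (connectedComponentIn Mᶜ c) →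
      {w : ℂ | r < ‖w‖} ⊆ connectedComponentIn Mᶜ c := by
    intro c hcu
    obtain ⟨w, hwC, hwr⟩ : ∃ w ∈ connectedComponentIn Mᶜ c, r < ‖w‖ := by
      by_contra h; push_neg at h
      exact hcu ((isBounded_closedBall (x := (0:ℂ)) (r := r)).subset
        fun w hw => mem_closedBall_zero_iff.mpr (h w hw))
    rw [connectedComponentIn_eq hwC]
    exact hFSc.subset_connectedComponentIn hwr hFS
  have hwex : ∃ w : ℂ, r < ‖w‖ := by
    refine ⟨((r+1 : ℝ) : ℂ), ?_⟩
    rw [Complex.norm_real, Real.norm_eq_abs, abs_of_nonneg (by linarith)]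
    linarith
  obtain ⟨w, hw⟩ := hwex
  have h1 := key z hzu hw
  have h2 := key b hbu hw
  rw [connectedComponentIn_eq h1, connectedComponentIn_eq h2]


/-- A preconnected subset of the lattice `2πiℤ` is a subsingleton. -/
lemma lattice_subsingleton {s : Set ℂ} (hs : IsPreconnected s)
    (h : ∀ w ∈ s, ∃ n : ℤ, w = (n : ℂ) * (2 * Real.pi * Complex.I)) : s.Subsingleton := by
  have pi_pos := Real.pi_pos
  have him : ∀ k : ℤ, ((k : ℂ) * (2 * Real.pi * Complex.I)).im = 2 * Real.pi * k := by
    intro k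
    simp [Complex.mul_im, Complex.mul_re]
    ring
  have aux : ∀ n m : ℤ, n < m → ((n : ℂ) * (2 * Real.pi * Complex.I)) ∈ s →
      ((m : ℂ) * (2 * Real.pi * Complex.I)) ∈ s → False := by
    intro n m hnm hx hy
    set c : ℝ := 2 * Real.pi * n + Real.pi with hc
    have hcov : s ⊆ {w : ℂ | w.im < c} ∪ {w : ℂ | c < w.im} := by
      intro w hw
      obtain ⟨k, rfl⟩ := h w hw
      rcases lt_trichotomy (2 * Real.pi * (k : ℝ)) c with hlt | heq | hgt
      · left; simpa only [mem_setOf_eq, him] using hlt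
      · exfalso
        have h2 : Real.pi * (2 * (k : ℝ) - (2 * (n : ℝ) + 1)) = 0 := by
          rw [hc] at heq; nlinarith
        have h3 : (2 * (k : ℝ) - (2 * (n : ℝ) + 1)) = 0 := by
          rcases mul_eq_zero.mp h2 with h | h
          · exact absurd h (ne_of_gt pi_pos)
          · exact h
        have h4 : (2 * k : ℝ) = 2 * (n : ℝ) + 1 := by linarith
        have h5 : (2 * k : ℤ) = 2 * n + 1 := by exact_mod_cast h4
        omega
      · right; simpa only [mem_setOf_eq, him] using hgt
    have hxin : ((n : ℂ) * (2 * Real.pi * Complex.I)) ∈ s ∩ {w : ℂ | w.im < c} := by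
      refine ⟨hx, ?_⟩
      simp only [mem_setOf_eq, him, hc]
      linarith
    have hyin : ((m : ℂ) * (2 * Real.pi * Complex.I)) ∈ s ∩ {w : ℂ | c < w.im} := by
      refine ⟨hy, ?_⟩
      simp only [mem_setOf_eq, him, hc]
      have : (n : ℝ) + 1 ≤ (m : ℝ) := by exact_mod_cast hnm
      nlinarith
    obtain ⟨w, _, hw1, hw2⟩ := hs {w : ℂ | w.im < c} {w : ℂ | c < w.im}
      (isOpen_lt Complex.continuous_im continuous_const)
      (isOpen_lt continuous_const Complex.continuous_im)
      hcov ⟨_, hxin⟩ ⟨_, hyin⟩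
    simp only [mem_setOf_eq] at hw1 hw2
    linarith
  intro x hx y hy
  by_contra hxy
  obtain ⟨n, rfl⟩ := h x hx
  obtain ⟨m, rfl⟩ := h y hy
  have hnm : n ≠ m := fun hEq => hxy (by rw [hEq])
  rcases hnm.lt_or_gt with hlt | hlt
  · exact aux n m hlt hx hy
  · exact aux m n hlt hy hx

/-- stepwise continuation of a logarithm along a one-parameter family. -/
lemma logstep {S : Set ℂ} (hS : IsCompact S) {f : ℝ → ℂ → ℂ}
    (hf : ContinuousOn (fun p : ℝ × ℂ => f p.1 p.2) (Icc 0 1 ×ˢ S))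
    (hne : ∀ t ∈ Icc (0:ℝ) 1, ∀ z ∈ S, f t z ≠ 0)
    (h0 : ∃ g : ℂ → ℂ, ContinuousOn g S ∧ ∀ z ∈ S, Complex.exp (g z) = f 0 z) :
    ∃ g : ℂ → ℂ, ContinuousOn g S ∧ ∀ z ∈ S, Complex.exp (g z) = f 1 z := by
  rcases S.eq_empty_or_nonempty with hSe | ⟨z₀, hz₀⟩
  · subst hSe; exact ⟨0, continuousOn_empty _, fun z hz => absurd hz (notMem_empty z)⟩
  have hP : IsCompact (Icc (0:ℝ) 1 ×ˢ S) := isCompact_Icc.prod hS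
  have hPne : (Icc (0:ℝ) 1 ×ˢ S).Nonempty := ⟨(0, z₀), ⟨left_mem_Icc.mpr zero_le_one, hz₀⟩⟩
  obtain ⟨p₀, hp₀P, hp₀⟩ := hP.exists_isMinOn hPne hf.norm
  set m := ‖f p₀.1 p₀.2‖ with hm
  have hmpos : 0 < m := norm_pos_iff.mpr (hne p₀.1 hp₀P.1 p₀.2 hp₀P.2)
  have hmle : ∀ t ∈ Icc (0:ℝ) 1, ∀ z ∈ S, m ≤ ‖f t z‖ := fun t ht z hz =>
    isMinOn_iff.mp hp₀ (t, z) ⟨ht, hz⟩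
  obtain ⟨δ, hδpos, hδ⟩ :=
    (Metric.uniformContinuousOn_iff.mp (hP.uniformContinuousOn_of_continuous hf)) m hmpos
  obtain ⟨n₀, hn₀⟩ := exists_nat_one_div_lt hδpos
  set n : ℕ := n₀ + 1 with hn
  have hnpos : 0 < (n:ℝ) := by positivity
  set τ : ℕ → ℝ := fun i => (i : ℝ) / n with hτ
  have hτmem : ∀ i : ℕ, i ≤ n → τ i ∈ Icc (0:ℝ) 1 := by
    intro i hi
    refine ⟨by positivity, ?_⟩
    rw [hτ]
    rw [div_le_one hnpos]
    exact_mod_cast hi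
  have hfc : ∀ t ∈ Icc (0:ℝ) 1, ContinuousOn (fun z => f t z) S := by
    intro t ht
    have heq : (fun z => f t z) = (fun p : ℝ × ℂ => f p.1 p.2) ∘ (fun z : ℂ => (t, z)) := rfl
    rw [heq]
    exact hf.comp (Continuous.continuousOn (by continuity)) (fun z hz => ⟨ht, hz⟩)
  have hstep : ∀ j : ℕ, j < n → ∀ z ∈ S, ‖f (τ (j+1)) z - f (τ j) z‖ < m := by
    intro j hj z hz
    have ht1 : τ (j+1) ∈ Icc (0:ℝ) 1 := hτmem _ hj
    have ht0 : τ j ∈ Icc (0:ℝ) 1 := hτmem _ hj.le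
    have hd : dist (τ (j+1), z) (τ j, z) < δ := by
      rw [Prod.dist_eq]
      simp only [dist_self]
      rw [max_eq_left dist_nonneg, Real.dist_eq]
      have heq : τ (j+1) - τ j = 1 / (n:ℝ) := by
        rw [hτ]; push_cast; field_simp; ring
      rw [heq, abs_of_pos (by positivity)]
      have hcast : (n:ℝ) = (n₀:ℝ) + 1 := by rw [hn]; push_cast; ring
      rw [hcast]; exact hn₀
    have := hδ (τ (j+1), z) ⟨ht1, hz⟩ (τ j, z) ⟨ht0, hz⟩ hd
    rwa [dist_eq_norm] at this
  have main : ∀ k : ℕ, k ≤ n →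
      ∃ g : ℂ → ℂ, ContinuousOn g S ∧ ∀ z ∈ S, Complex.exp (g z) = f (τ k) z := by
    intro k
    induction k with
    | zero =>
      intro _
      have : τ 0 = 0 := by rw [hτ]; simp
      rw [this]; exact h0
    | succ j ih =>
      intro hk
      obtain ⟨g, hgc, hge⟩ := ih (Nat.le_of_succ_le hk)
      have hjlt : j < n := Nat.lt_of_succ_le hk
      have hq : ∀ z ∈ S, f (τ (j+1)) z / f (τ j) z ∈ Complex.slitPlane := by
        intro z hz
        have hne0 : f (τ j) z ≠ 0 := hne _ (hτmem j hjlt.le) z hz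
        have h1 : ‖f (τ (j+1)) z / f (τ j) z - 1‖ < 1 := by
          have heq : f (τ (j+1)) z / f (τ j) z - 1 = (f (τ (j+1)) z - f (τ j) z) / f (τ j) z := by
            field_simp
          rw [heq, norm_div, div_lt_one (norm_pos_iff.mpr hne0)]
          exact lt_of_lt_of_le (hstep j hjlt z hz) (hmle _ (hτmem j hjlt.le) z hz)
        rw [Complex.mem_slitPlane_iff]
        left
        have h2 := Complex.abs_re_le_norm (f (τ (j+1)) z / f (τ j) z - 1)
        simp only [Complex.sub_re, Complex.one_re] at h2
        have h3 := abs_lt.mp (lt_of_le_of_lt h2 h1)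
        linarith [h3.1]
      refine ⟨fun z => g z + Complex.log (f (τ (j+1)) z / f (τ j) z), ?_, ?_⟩
      · refine hgc.add (ContinuousOn.clog ?_ hq)
        exact (hfc _ (hτmem _ hk)).div (hfc _ (hτmem _ hjlt.le))
          (fun z hz => hne _ (hτmem j hjlt.le) z hz)
      · intro z hz
        have hne0 : f (τ j) z ≠ 0 := hne _ (hτmem j hjlt.le) z hz
        have hne1 : f (τ (j+1)) z ≠ 0 := hne _ (hτmem _ hk) z hz
        rw [Complex.exp_add, hge z hz, Complex.exp_log (div_ne_zero hne1 hne0)]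
        field_simp
  obtain ⟨g, hgc, hge⟩ := main n le_rfl
  refine ⟨g, hgc, fun z hz => ?_⟩
  have hτn : τ n = 1 := by rw [hτ]; field_simp
  rw [← hτn]
  exact hge z hz


/-- glue two continuous logarithms along a preconnected intersection. -/
lemma glue_log {M1 M2 : Set ℂ} (h1 : IsClosed M1) (h2 : IsClosed M2)
    (hconn : IsPreconnected (M1 ∩ M2)) {f g1 g2 : ℂ → ℂ}
    (hg1c : ContinuousOn g1 M1) (hg1e : ∀ z ∈ M1, Complex.exp (g1 z) = f z)
    (hg2c : ContinuousOn g2 M2) (hg2e : ∀ z ∈ M2, Complex.exp (g2 z) = f z) :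
    ∃ g : ℂ → ℂ, ContinuousOn g (M1 ∪ M2) ∧ ∀ z ∈ M1 ∪ M2, Complex.exp (g z) = f z := by
  classical
  have hdiff : ∀ z ∈ M1 ∩ M2, ∃ n : ℤ, g1 z - g2 z = (n : ℂ) * (2 * Real.pi * Complex.I) := by
    intro z hz
    rw [← Complex.exp_eq_one_iff, Complex.exp_sub, hg1e z hz.1, hg2e z hz.2]
    exact div_self (by rw [← hg1e z hz.1]; exact Complex.exp_ne_zero _)
  obtain ⟨c, hcexp, hc⟩ : ∃ c : ℂ, Complex.exp c = 1 ∧ ∀ z ∈ M1 ∩ M2, g1 z = g2 z + c := by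
    rcases (M1 ∩ M2).eq_empty_or_nonempty with he | ⟨z₀, hz₀⟩
    · exact ⟨0, Complex.exp_zero, by rw [he]; exact fun z hz => absurd hz (notMem_empty z)⟩
    · refine ⟨g1 z₀ - g2 z₀, ?_, ?_⟩
      · rw [Complex.exp_sub, hg1e z₀ hz₀.1, hg2e z₀ hz₀.2]
        exact div_self (by rw [← hg1e z₀ hz₀.1]; exact Complex.exp_ne_zero _)
      · intro z hz
        have hsub : Set.Subsingleton ((fun w => g1 w - g2 w) '' (M1 ∩ M2)) := by
          apply lattice_subsingleton
            (hconn.image _ ((hg1c.mono inter_subset_left).sub (hg2c.mono inter_subset_right)))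
          rintro w ⟨u, hu, rfl⟩
          exact hdiff u hu
        have heq := hsub (mem_image_of_mem _ hz) (mem_image_of_mem _ hz₀)
        linear_combination heq
  refine ⟨fun z => if z ∈ M1 then g1 z else g2 z + c, ?_, ?_⟩
  · intro x hx
    rw [ContinuousWithinAt] at *
    have : ContinuousWithinAt (fun z => if z ∈ M1 then g1 z else g2 z + c) (M1 ∪ M2) x := by
      rw [continuousWithinAt_union]
      constructor
      · by_cases hx1 : x ∈ M1
        · exact ((hg1c x hx1).congr (fun w hw => if_pos hw) (if_pos hx1))
        · exact continuousWithinAt_of_notMem_closure (fun hcl => hx1 (h1.closure_subset hcl))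
      · by_cases hx2 : x ∈ M2
        · have hbase : ContinuousWithinAt (fun z => g2 z + c) M2 x :=
            (hg2c x hx2).add continuousWithinAt_const
          refine hbase.congr (fun w hw => ?_) ?_
          · by_cases hw1 : w ∈ M1
            · rw [if_pos hw1]; exact hc w ⟨hw1, hw⟩
            · rw [if_neg hw1]
          · by_cases hx1 : x ∈ M1
            · rw [if_pos hx1]; exact hc x ⟨hx1, hx2⟩
            · rw [if_neg hx1]
        · exact continuousWithinAt_of_notMem_closure (fun hcl => hx2 (h2.closure_subset hcl))
    exact this
  · intro z hz
    show Complex.exp (if z ∈ M1 then g1 z else g2 z + c) = f z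
    by_cases hz1 : z ∈ M1
    · rw [if_pos hz1]; exact hg1e z hz1
    · rcases hz with hz1' | hz2
      · exact absurd hz1' hz1
      · rw [if_neg hz1, Complex.exp_add, hcexp, mul_one]
        exact hg2e z hz2

/-- Eilenberg: same component gives a continuous logarithm of `(z-a)/(z-b)`. -/
lemma exists_log_ratio {M : Set ℂ} (hM : IsCompact M) {a b : ℂ} (ha : a ∉ M)
    (hb : b ∈ connectedComponentIn Mᶜ a) :
    ∃ g : ℂ → ℂ, ContinuousOn g M ∧ ∀ z ∈ M, Complex.exp (g z) = (z - a) / (z - b) := by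
  have haM : a ∈ Mᶜ := ha
  have hCopen : IsOpen (connectedComponentIn Mᶜ a) :=
    hM.isClosed.isOpen_compl.connectedComponentIn
  have hCconn : IsConnected (connectedComponentIn Mᶜ a) :=
    isConnected_connectedComponentIn_iff.mpr haM
  have hCpath : IsPathConnected (connectedComponentIn Mᶜ a) :=
    (hCopen.isConnected_iff_isPathConnected).mp hCconn
  obtain ⟨γ, hγ⟩ := hCpath.joinedIn a (mem_connectedComponentIn haM) b hb
  have hmemC : ∀ t ∈ Icc (0:ℝ) 1, γ.extend t ∈ Mᶜ := by
    intro t ht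
    rw [Path.extend_apply γ ht]
    exact connectedComponentIn_subset _ _ (hγ _)
  have hcont : ContinuousOn (fun p : ℝ × ℂ => (p.2 - a) / (p.2 - γ.extend p.1))
      (Icc 0 1 ×ˢ M) := by
    apply ContinuousOn.div
    · exact (continuous_snd.sub continuous_const).continuousOn
    · exact (continuous_snd.sub (γ.continuous_extend.comp continuous_fst)).continuousOn
    · rintro ⟨t, z⟩ ⟨ht, hz⟩
      exact sub_ne_zero.mpr (fun h => (hmemC t ht) (by rw [← h]; exact hz))
  have hnz : ∀ t ∈ Icc (0:ℝ) 1, ∀ z ∈ M, (z - a) / (z - γ.extend t) ≠ 0 := by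
    rintro t ht z hz
    refine div_ne_zero (sub_ne_zero.mpr (fun h => ha (by rw [← h]; exact hz))) ?_
    exact sub_ne_zero.mpr (fun h => (hmemC t ht) (by rw [← h]; exact hz))
  have h0 : ∃ g : ℂ → ℂ, ContinuousOn g M ∧
      ∀ z ∈ M, Complex.exp (g z) = (z - a) / (z - γ.extend 0) := by
    refine ⟨0, continuousOn_const, fun z hz => ?_⟩
    show Complex.exp 0 = (z - a) / (z - γ.extend 0)
    rw [Complex.exp_zero, γ.extend_zero]
    exact (div_self (sub_ne_zero.mpr (fun h => ha (by rw [← h]; exact hz)))).symm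
  obtain ⟨g, hgc, hge⟩ := logstep (f := fun t z => (z - a) / (z - γ.extend t)) hM hcont hnz h0
  refine ⟨g, hgc, fun z hz => ?_⟩
  rw [hge z hz, γ.extend_one]

/-- `z - a` has no continuous logarithm on a circle around `a`. -/
lemma no_log_sphere {a : ℂ} {R : ℝ} (hR : 0 < R) :
    ¬ ∃ φ : ℂ → ℂ, ContinuousOn φ (sphere a R) ∧
      ∀ z ∈ sphere a R, Complex.exp (φ z) = z - a := by
  rintro ⟨φ, hφc, hφe⟩
  set κ : ℝ → ℂ := fun θ => a + (R : ℂ) * Complex.exp ((θ : ℂ) * Complex.I) with hκ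
  have hκmem : ∀ θ : ℝ, κ θ ∈ sphere a R := by
    intro θ
    simp only [hκ, mem_sphere_iff_norm, add_sub_cancel_left, norm_mul,
      Complex.norm_real, Real.norm_eq_abs, Complex.norm_exp_ofReal_mul_I, mul_one, abs_of_pos hR]
  set ψ : ℝ → ℂ := fun θ => φ (κ θ) - ((Real.log R : ℂ) + (θ : ℂ) * Complex.I) with hψ
  have hψc : Continuous ψ := by
    refine Continuous.sub ?_ (by continuity)
    exact hφc.comp_continuous (by continuity) hκmem
  have hψval : ∀ θ : ℝ, ∃ n : ℤ, ψ θ = (n : ℂ) * (2 * Real.pi * Complex.I) := by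
    intro θ
    rw [← Complex.exp_eq_one_iff, hψ]
    simp only
    rw [Complex.exp_sub, hφe _ (hκmem θ)]
    have h2 : κ θ - a = (R : ℂ) * Complex.exp ((θ : ℂ) * Complex.I) := by
      rw [hκ]; ring
    rw [h2, Complex.exp_add]
    have h3 : Complex.exp ((Real.log R : ℂ)) = (R : ℂ) := by
      rw [← Complex.ofReal_exp, Real.exp_log hR]
    rw [h3]
    exact div_self (mul_ne_zero (Complex.ofReal_ne_zero.mpr (ne_of_gt hR)) (Complex.exp_ne_zero _))
  have hsub := lattice_subsingleton
    ((isPreconnected_univ (α := ℝ)).image ψ hψc.continuousOn)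
    (by rintro w ⟨θ, -, rfl⟩; exact hψval θ)
  have hψeq : ψ (2 * Real.pi) = ψ 0 :=
    hsub (mem_image_of_mem _ (mem_univ _)) (mem_image_of_mem _ (mem_univ _))
  have hκeq : κ (2 * Real.pi) = κ 0 := by
    have e1 : ((2 * Real.pi : ℝ) : ℂ) * Complex.I = 2 * (Real.pi : ℂ) * Complex.I := by
      push_cast; ring
    simp only [hκ, e1, Complex.exp_two_pi_mul_I, Complex.ofReal_zero, zero_mul, Complex.exp_zero]
  rw [hψ] at hψeq
  simp only [hκeq] at hψeq
  have h5 : ((2 * Real.pi : ℝ) : ℂ) * Complex.I = ((0:ℝ) : ℂ) * Complex.I := by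
    have := sub_right_inj.mp hψeq
    exact (add_right_inj _).mp this
  simp only [Complex.ofReal_zero, zero_mul, mul_eq_zero, Complex.ofReal_eq_zero,
    Complex.I_ne_zero, or_false] at h5
  have := Real.pi_pos
  rcases h5 with h | h
  · norm_num at h
  · linarith


/-- if `(z-a)/(z-b)` has a continuous logarithm on compact `M` then `a`'s bounded
component of the complement cannot avoid `b`. -/
lemma jani_aux {M : Set ℂ} (hM : IsCompact M) {a b : ℂ} (ha : a ∉ M) (hb : b ∉ M)
    {g : ℂ → ℂ} (hgc : ContinuousOn g M)
    (hge : ∀ z ∈ M, Complex.exp (g z) = (z - a) / (z - b))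
    (hCb : IsBounded (connectedComponentIn Mᶜ a))
    (hbC : b ∉ connectedComponentIn Mᶜ a) : False := by
  classical
  set C := connectedComponentIn Mᶜ a with hCdef
  have haC : a ∈ C := mem_connectedComponentIn (by exact ha)
  have hCopen : IsOpen C := hM.isClosed.isOpen_compl.connectedComponentIn
  have hclos : closure C ⊆ C ∪ M := by
    intro y hy
    by_cases hyM : y ∈ M
    · exact Or.inr hyM
    · exact Or.inl (closure_inter_subset hM.isClosed.isOpen_compl a ⟨hy, hyM⟩)
  have hbD : b ∉ closure C := fun hbcl => (hclos hbcl).elim hbC hb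
  -- Tietze extension of g
  obtain ⟨G, hG⟩ := ContinuousMap.exists_restrict_eq (X := ℂ) hM.isClosed
    ⟨M.restrict g, hgc.restrict⟩
  have hGM : ∀ z (hz : z ∈ M), G z = g z := by
    intro z hz
    have := DFunLike.congr_fun hG ⟨z, hz⟩
    exact this
  set D := closure C with hDdef
  have hfr : ∀ z ∈ frontier D, Complex.exp (G z) * (z - b) = z - a := by
    intro z hz
    have hzD : z ∈ D := isClosed_closure.frontier_subset hz
    have hznotint : z ∉ interior D := by
      rw [← closure_diff_interior] at hz
      exact hz.2
    have hzC : z ∉ C := fun hzC => hznotint (interior_maximal subset_closure hCopen hzC)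
    have hzM : z ∈ M := (hclos hzD).elim (fun h => absurd h hzC) id
    have hzb : z - b ≠ 0 := sub_ne_zero.mpr (fun h => hb (by rw [← h]; exact hzM))
    rw [hGM z hzM, hge z hzM, div_mul_cancel₀ _ hzb]
  set H : ℂ → ℂ := D.piecewise (fun z => Complex.exp (G z) * (z - b)) (fun z => z - a)
    with hHdef
  have hHcont : Continuous H := by
    refine Continuous.piecewise hfr ?_ ?_
    · exact (Complex.continuous_exp.comp G.continuous).mul (continuous_id.sub continuous_const)
    · exact continuous_id.sub continuous_const
  have hHne : ∀ z, H z ≠ 0 := by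
    intro z
    by_cases hzD : z ∈ D
    · rw [hHdef, piecewise_eq_of_mem _ _ _ hzD]
      exact mul_ne_zero (Complex.exp_ne_zero _)
        (sub_ne_zero.mpr (fun h => hbD (by rw [← h]; exact hzD)))
    · rw [hHdef, piecewise_eq_of_notMem _ _ _ hzD]
      exact sub_ne_zero.mpr (fun h => hzD (by rw [h]; exact subset_closure haC))
  obtain ⟨r₀, hr₀⟩ := hCb.closure.subset_closedBall a
  set R : ℝ := max r₀ 0 + 1 with hRdef
  have hRpos : 0 < R := by positivity
  have hDR : D ⊆ closedBall a r₀ := hr₀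
  have hsphD : ∀ z ∈ sphere a R, z ∉ D := by
    intro z hz hzD
    have h1 := mem_closedBall.mp (hDR hzD)
    have h2 := mem_sphere.mp hz
    have := le_max_left r₀ 0
    rw [h2] at h1
    linarith
  have hsphH : ∀ z ∈ sphere a R, H z = z - a := fun z hz =>
    piecewise_eq_of_notMem _ _ _ (hsphD z hz)
  -- contract the sphere to the center through `H`
  have hcont2 : ContinuousOn (fun p : ℝ × ℂ => H (a + (p.1 : ℂ) * (p.2 - a)))
      (Icc 0 1 ×ˢ sphere a R) := by
    apply Continuous.continuousOn
    apply hHcont.comp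
    continuity
  have hne2 : ∀ t ∈ Icc (0:ℝ) 1, ∀ z ∈ sphere a R, H (a + (t : ℂ) * (z - a)) ≠ 0 :=
    fun t _ z _ => hHne _
  have h02 : ∃ g : ℂ → ℂ, ContinuousOn g (sphere a R) ∧
      ∀ z ∈ sphere a R, Complex.exp (g z) = H (a + ((0:ℝ) : ℂ) * (z - a)) := by
    have hHa : H a ∈ Set.range Complex.exp := by
      rw [Complex.range_exp]; exact hHne a
    obtain ⟨c, hc⟩ := hHa
    refine ⟨fun _ => c, continuousOn_const, fun z _ => ?_⟩
    rw [hc]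
    norm_num
  obtain ⟨φ, hφc, hφe⟩ := logstep (isCompact_sphere a R)
    (f := fun t z => H (a + (t : ℂ) * (z - a))) hcont2 hne2 h02
  refine no_log_sphere hRpos ⟨φ, hφc, fun z hz => ?_⟩
  rw [hφe z hz]
  have harg : a + ((1:ℝ) : ℂ) * (z - a) = z := by push_cast; ring
  rw [harg]
  exact hsphH z hz

/-- Janiszewski-type theorem for two compact sets with preconnected intersection. -/
lemma jani {M1 M2 : Set ℂ} (h1 : IsCompact M1) (h2 : IsCompact M2)
    (h12 : IsPreconnected (M1 ∩ M2)) {a b : ℂ} (ha : a ∉ M1 ∪ M2) (hb : b ∉ M1 ∪ M2)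
    (j1 : b ∈ connectedComponentIn M1ᶜ a) (j2 : b ∈ connectedComponentIn M2ᶜ a) :
    b ∈ connectedComponentIn (M1 ∪ M2)ᶜ a := by
  by_contra hbC
  have ha1 : a ∉ M1 := fun h => ha (Or.inl h)
  have ha2 : a ∉ M2 := fun h => ha (Or.inr h)
  have haM : a ∈ (M1 ∪ M2)ᶜ := ha
  have hbM : b ∈ (M1 ∪ M2)ᶜ := hb
  obtain ⟨g1, hg1c, hg1e⟩ := exists_log_ratio h1 ha1 j1
  obtain ⟨g2, hg2c, hg2e⟩ := exists_log_ratio h2 ha2 j2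
  obtain ⟨g, hgc, hge⟩ := glue_log h1.isClosed h2.isClosed h12 hg1c hg1e hg2c hg2e
  have hMcpt : IsCompact (M1 ∪ M2) := h1.union h2
  obtain ⟨r₀, hr₀⟩ := hMcpt.isBounded.subset_closedBall 0
  have hMr : M1 ∪ M2 ⊆ closedBall 0 (max r₀ 0) :=
    hr₀.trans (closedBall_subset_closedBall (le_max_left _ _))
  by_cases hA : IsBounded (connectedComponentIn (M1 ∪ M2)ᶜ a)
  · exact jani_aux hMcpt ha hb hgc hge hA hbC
  by_cases hB : IsBounded (connectedComponentIn (M1 ∪ M2)ᶜ b)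
  · have haB : a ∉ connectedComponentIn (M1 ∪ M2)ᶜ b := fun haB =>
      hbC ((connectedComponentIn_eq haB) ▸ mem_connectedComponentIn hbM)
    refine jani_aux hMcpt hb ha (g := fun z => -g z) hgc.neg (fun z hz => ?_) hB haB
    rw [Complex.exp_neg, hge z hz, inv_div]
  · have heq := comp_eq_of_unbounded (le_max_right r₀ 0) hMr haM hbM hA hB
    exact hbC (heq ▸ mem_connectedComponentIn hbM)


lemma side_contradiction {M A : Set ℂ} {r : ℝ} (hr : 0 ≤ r) (hMA : M ⊆ A)
    (hMr : M ⊆ closedBall 0 r) {z b : ℂ} (hz : z ∉ A)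
    (hzu : ¬ IsBounded (connectedComponentIn Aᶜ z)) (hbr : r < ‖b‖) :
    b ∈ connectedComponentIn Mᶜ z := by
  have hzM : z ∈ Mᶜ := fun h => hz (hMA h)
  have hbM : b ∈ Mᶜ := fun h => absurd (mem_closedBall_zero_iff.mp (hMr h)) (not_le.mpr hbr)
  have hFSsub : {w : ℂ | r < ‖w‖} ⊆ Mᶜ := fun w hw h =>
    absurd (mem_closedBall_zero_iff.mp (hMr h)) (not_le.mpr hw)
  have hFScomp : {w : ℂ | r < ‖w‖} ⊆ connectedComponentIn Mᶜ b :=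
    (isPathConnected_far hr).isConnected.isPreconnected.subset_connectedComponentIn hbr hFSsub
  have hbu : ¬ IsBounded (connectedComponentIn Mᶜ b) := fun h =>
    far_not_bounded r (h.subset hFScomp)
  have hzu' : ¬ IsBounded (connectedComponentIn Mᶜ z) := fun h =>
    hzu (h.subset (connectedComponentIn_mono z (compl_subset_compl.mpr hMA)))
  have heq := comp_eq_of_unbounded hr hMr hzM hbM hzu' hbu
  rw [heq]
  exact mem_connectedComponentIn hbM


end ArakelyanAuxiliary

open ArakelyanAuxiliary

/-- The union of two disjoint Arakeljan sets in the plane is an Arakeljan set. -/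
theorem stmt_18 (E F : Set ℂ) (hE : ArakelyanSet E) (hF : ArakelyanSet F)
    (hdisj : Disjoint E F) : ArakelyanSet (E ∪ F) := by

  obtain ⟨hEc, hEnb, hEK⟩ := hE
  obtain ⟨hFc, hFnb, hFK⟩ := hF
  have hSc : IsClosed (E ∪ F) := hEc.union hFc
  refine ⟨hSc, ?_, ?_⟩
  · -- no bounded complement components
    intro z hz hbdd
    set C := connectedComponentIn (E ∪ F)ᶜ z with hCdef
    have hzE : z ∉ E := fun h => hz (Or.inl h)
    have hzF : z ∉ F := fun h => hz (Or.inr h)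
    set M1 := E ∩ closure C with hM1def
    set M2 := F ∩ closure C with hM2def
    have hbdcl : IsBounded (closure C) := hbdd.closure
    have hM1c : IsCompact M1 :=
      isCompact_of_isClosed_isBounded (hEc.inter isClosed_closure)
        (hbdcl.subset inter_subset_right)
    have hM2c : IsCompact M2 :=
      isCompact_of_isClosed_isBounded (hFc.inter isClosed_closure)
        (hbdcl.subset inter_subset_right)
    have hpre : IsPreconnected (M1 ∩ M2) := by
      have he : M1 ∩ M2 = ∅ := by
        rw [eq_empty_iff_forall_notMem]
        rintro w ⟨⟨hw1, -⟩, ⟨hw2, -⟩⟩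
        exact (disjoint_left.mp hdisj) hw1 hw2
      rw [he]
      exact isPreconnected_empty
    have hTS : M1 ∪ M2 ⊆ E ∪ F := union_subset_union inter_subset_left inter_subset_left
    have hTclosed : IsClosed (M1 ∪ M2) := hM1c.isClosed.union hM2c.isClosed
    have hsubT : (E ∪ F) ∩ closure C ⊆ M1 ∪ M2 := by
      rintro w ⟨hw1 | hw1, hw2⟩
      · exact Or.inl ⟨hw1, hw2⟩
      · exact Or.inr ⟨hw1, hw2⟩
    have hrecomp := recomp hSc hTclosed hTS hz hsubT
    obtain ⟨r₀, hr₀⟩ := hbdcl.subset_closedBall 0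
    set r : ℝ := max r₀ 0 with hrdef
    have hr : 0 ≤ r := le_max_right _ _
    have hclr : closure C ⊆ closedBall 0 r :=
      hr₀.trans (closedBall_subset_closedBall (le_max_left _ _))
    set b : ℂ := ((r + 1 : ℝ) : ℂ) with hbdef
    have hbnorm : ‖b‖ = r + 1 := by
      rw [hbdef, Complex.norm_real, Real.norm_eq_abs, abs_of_nonneg (by linarith)]
    have hbr : r < ‖b‖ := by rw [hbnorm]; linarith
    have hTcl : M1 ∪ M2 ⊆ closure C := union_subset inter_subset_right inter_subset_right
    have hbT : b ∉ M1 ∪ M2 := by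
      intro h
      have := mem_closedBall_zero_iff.mp (hclr (hTcl h))
      rw [hbnorm] at this
      linarith
    have hzT : z ∉ M1 ∪ M2 := fun h => hz (hTS h)
    have hbnotC : b ∉ connectedComponentIn (M1 ∪ M2)ᶜ z := by
      rw [hrecomp]
      intro hbC
      have := mem_closedBall_zero_iff.mp (hclr (subset_closure hbC))
      rw [hbnorm] at this
      linarith
    refine hbnotC (jani hM1c hM2c hpre hzT hbT ?_ ?_)
    · exact side_contradiction hr inter_subset_left (inter_subset_right.trans hclr) hzE
        (hEnb z hzE) hbr
    · exact side_contradiction hr inter_subset_left (inter_subset_right.trans hclr) hzF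
        (hFnb z hzF) hbr
  · -- third condition
    intro K hKcpt hKconn
    have hHE := hEK K hKcpt hKconn
    have hHF := hFK K hKcpt hKconn
    refine (hHE.union hHF).subset ?_
    refine iUnion₂_subset fun z hz => ?_
    obtain ⟨hzS, hbdd⟩ := hz
    have hzE : z ∉ E := fun h => hzS (Or.inl (Or.inl h))
    have hzF : z ∉ F := fun h => hzS (Or.inl (Or.inr h))
    have hzK : z ∉ K := fun h => hzS (Or.inr h)
    have hzEK : z ∉ E ∪ K := fun h => h.elim hzE hzK
    have hzFK : z ∉ F ∪ K := fun h => h.elim hzF hzK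
    have hSKc : IsClosed (E ∪ F ∪ K) := hSc.union hKcpt.isClosed
    set C := connectedComponentIn (E ∪ F ∪ K)ᶜ z with hCdef
    have key : IsBounded (connectedComponentIn (E ∪ K)ᶜ z) ∨
        IsBounded (connectedComponentIn (F ∪ K)ᶜ z) := by
      by_contra hcon
      push_neg at hcon
      obtain ⟨hu1, hu2⟩ := hcon
      set M1 := E ∩ closure C ∪ K with hM1def
      set M2 := F ∩ closure C ∪ K with hM2def
      have hbdcl : IsBounded (closure C) := hbdd.closure
      have hM1c : IsCompact M1 :=
        (isCompact_of_isClosed_isBounded (hEc.inter isClosed_closure)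
          (hbdcl.subset inter_subset_right)).union hKcpt
      have hM2c : IsCompact M2 :=
        (isCompact_of_isClosed_isBounded (hFc.inter isClosed_closure)
          (hbdcl.subset inter_subset_right)).union hKcpt
      have hpre : IsPreconnected (M1 ∩ M2) := by
        have he : M1 ∩ M2 = K := by
          apply subset_antisymm
          · rintro w ⟨hw1 | hw1, hw2 | hw2⟩
            · exact ((disjoint_left.mp hdisj) hw1.1 hw2.1).elim
            · exact hw2
            · exact hw1
            · exact hw1
          · exact fun w hw => ⟨Or.inr hw, Or.inr hw⟩
        rw [he]
        exact hKconn.isPreconnected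
      have hTS : M1 ∪ M2 ⊆ E ∪ F ∪ K := by
        rintro w (hw | hw)
        · rcases hw with hw | hw
          · exact Or.inl (Or.inl hw.1)
          · exact Or.inr hw
        · rcases hw with hw | hw
          · exact Or.inl (Or.inr hw.1)
          · exact Or.inr hw
      have hTclosed : IsClosed (M1 ∪ M2) := hM1c.isClosed.union hM2c.isClosed
      have hsubT : (E ∪ F ∪ K) ∩ closure C ⊆ M1 ∪ M2 := by
        rintro w ⟨hw1 | hw1, hw2⟩
        · rcases hw1 with hw1 | hw1
          · exact Or.inl (Or.inl ⟨hw1, hw2⟩)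
          · exact Or.inr (Or.inl ⟨hw1, hw2⟩)
        · exact Or.inl (Or.inr hw1)
      have hrecomp := recomp hSKc hTclosed hTS hzS hsubT
      have hbound : M1 ∪ M2 ⊆ closure C ∪ K := by
        rintro w (hw | hw) <;> rcases hw with hw | hw
        · exact Or.inl hw.2
        · exact Or.inr hw
        · exact Or.inl hw.2
        · exact Or.inr hw
      obtain ⟨r₀, hr₀⟩ := (hbdcl.union hKcpt.isBounded).subset_closedBall 0
      set r : ℝ := max r₀ 0 with hrdef
      have hr : 0 ≤ r := le_max_right _ _
      have hclr : closure C ∪ K ⊆ closedBall 0 r :=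
        hr₀.trans (closedBall_subset_closedBall (le_max_left _ _))
      set b : ℂ := ((r + 1 : ℝ) : ℂ) with hbdef
      have hbnorm : ‖b‖ = r + 1 := by
        rw [hbdef, Complex.norm_real, Real.norm_eq_abs, abs_of_nonneg (by linarith)]
      have hbr : r < ‖b‖ := by rw [hbnorm]; linarith
      have hbT : b ∉ M1 ∪ M2 := by
        intro h
        have := mem_closedBall_zero_iff.mp (hclr (hbound h))
        rw [hbnorm] at this
        linarith
      have hzT : z ∉ M1 ∪ M2 := fun h => hzS (hTS h)
      have hbnotC : b ∉ connectedComponentIn (M1 ∪ M2)ᶜ z := by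
        rw [hrecomp]
        intro hbC
        have := mem_closedBall_zero_iff.mp (hclr (Or.inl (subset_closure hbC)))
        rw [hbnorm] at this
        linarith
      refine hbnotC (jani hM1c hM2c hpre hzT hbT ?_ ?_)
      · refine side_contradiction hr ?_ ?_ hzEK hu1 hbr
        · exact union_subset_union_left K inter_subset_left
        · exact (union_subset_union_left K inter_subset_right).trans hclr
      · refine side_contradiction hr ?_ ?_ hzFK hu2 hbr
        · exact union_subset_union_left K inter_subset_left
        · exact (union_subset_union_left K inter_subset_right).trans hclr
    rcases key with hb1 | hb2
    · refine subset_union_of_subset_left ?_ _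
      refine subset_trans ?_ (subset_biUnion_of_mem
        (u := fun w => connectedComponentIn (E ∪ K)ᶜ w)
        (show z ∈ {w : ℂ | w ∉ E ∪ K ∧ IsBounded (connectedComponentIn (E ∪ K)ᶜ w)} from
          ⟨hzEK, hb1⟩))
      exact connectedComponentIn_mono z
        (compl_subset_compl.mpr (union_subset_union_left K subset_union_left))
    · refine subset_union_of_subset_right ?_ _
      refine subset_trans ?_ (subset_biUnion_of_mem
        (u := fun w => connectedComponentIn (F ∪ K)ᶜ w)
        (show z ∈ {w : ℂ | w ∉ F ∪ K ∧ IsBounded (connectedComponentIn (F ∪ K)ᶜ w)} from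
          ⟨hzFK, hb2⟩))
      exact connectedComponentIn_mono z
        (compl_subset_compl.mpr (union_subset_union_left K subset_union_right))
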